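/- Newton's inequalities: for nonnegative reals α_1, …, α_n, and 1 ≤ k ≤ n-1, one has (σ_k/C(n,k))^2 ≥ (σ_{k-1}/C(n,k-1)) · (σ_{k+1}/C(n,k+1)), where σ_k is the k-th elementary symmetric polynomial of α_1,…,α_n and C(n,k) is the binomial coefficient. -/
import Mathlib

open scoped BigOperators
open Polynomial Finset

namespace NewtonAux

lemma esymm_nonneg (t : Multiset ℝ) (h : ∀ x ∈ t, 0 ≤ x) (j : ℕ) : 0 ≤ t.esymm j := by
  apply Multiset.sum_nonneg
  intro a ha
  simp only [Multiset.mem_map] at ha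
  obtain ⟨u, hu, rfl⟩ := ha
  exact Multiset.prod_nonneg fun x hx =>
    h x (Multiset.mem_of_le (Multiset.mem_powersetCard.mp hu).1 hx)

lemma sum_powersetCard_compl (S : Finset ℕ) (x : ℕ → ℝ) (j : ℕ) (hj : j ≤ S.card) :
    ∑ s ∈ S.powersetCard (S.card - j), ∏ i ∈ s, x i
      = ∑ p ∈ S.powersetCard j, ∏ i ∈ S \ p, x i := by
  refine Finset.sum_nbij' (fun s => S \ s) (fun p => S \ p) ?_ ?_ ?_ ?_ ?_
  · intro s hs
    rw [Finset.mem_powersetCard] at hs ⊢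
    exact ⟨Finset.sdiff_subset, by rw [Finset.card_sdiff_of_subset hs.1, hs.2]; omega⟩
  · intro p hp
    rw [Finset.mem_powersetCard] at hp ⊢
    exact ⟨Finset.sdiff_subset, by rw [Finset.card_sdiff_of_subset hp.1, hp.2]⟩
  · intro s hs
    rw [Finset.mem_powersetCard] at hs
    exact Finset.sdiff_sdiff_eq_self hs.1
  · intro p hp
    rw [Finset.mem_powersetCard] at hp
    exact Finset.sdiff_sdiff_eq_self hp.1
  · intro s hs
    rw [Finset.mem_powersetCard] at hs
    rw [Finset.sdiff_sdiff_eq_self hs.1]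

lemma two_mul_sum_pc_two (S : Finset ℕ) (x : ℕ → ℝ) :
    2 * ∑ p ∈ S.powersetCard 2, ∏ i ∈ p, x i
      = (∑ i ∈ S, x i) ^ 2 - ∑ i ∈ S, x i ^ 2 := by
  induction S using Finset.induction with
  | empty =>
    rw [Finset.powersetCard_eq_empty.mpr (by simp)]
    simp
  | @insert a S ha IH =>
    have h2 : Finset.powersetCard 2 (insert a S)
        = Finset.powersetCard 2 S ∪ (Finset.powersetCard 1 S).image (insert a) :=
      Finset.powersetCard_succ_insert ha 1
    have hdisj : Disjoint (Finset.powersetCard 2 S)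
        ((Finset.powersetCard 1 S).image (insert a)) := by
      rw [Finset.disjoint_left]
      intro s hs hs'
      rw [Finset.mem_powersetCard] at hs
      obtain ⟨u, hu, rfl⟩ := Finset.mem_image.mp hs'
      exact ha (hs.1 (Finset.mem_insert_self a u))
    have hinj : ∀ u ∈ Finset.powersetCard 1 S, ∀ v ∈ Finset.powersetCard 1 S,
        insert a u = insert a v → u = v := by
      intro u hu v hv huv
      rw [Finset.mem_powersetCard] at hu hv
      have hau : a ∉ u := fun h => ha (hu.1 h)
      have hav : a ∉ v := fun h => ha (hv.1 h)
      rw [← Finset.erase_insert hau, ← Finset.erase_insert hav, huv]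
    have himg : ∑ p ∈ (Finset.powersetCard 1 S).image (insert a), ∏ i ∈ p, x i
        = x a * ∑ i ∈ S, x i := by
      rw [Finset.sum_image hinj, Finset.powersetCard_one, Finset.sum_map, Finset.mul_sum]
      refine Finset.sum_congr rfl fun i hi => ?_
      have hai : a ∉ ({i} : Finset ℕ) := by
        simp only [Finset.mem_singleton]
        rintro rfl; exact ha hi
      simp [Finset.prod_insert hai]
    rw [h2, Finset.sum_union hdisj, himg, Finset.sum_insert ha, Finset.sum_insert ha]
    ring_nf
    ring_nf at IH
    linarith [IH]

lemma prod_sdiff_pair (S : Finset ℕ) (x : ℕ → ℝ) (p : Finset ℕ) (hp : p ⊆ S)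
    (hc : p.card = 2) :
    (∏ i ∈ S \ p, x i) * ∏ i ∈ S, x i = ∏ i ∈ p, (∏ j ∈ S.erase i, x j) := by
  obtain ⟨i, j, hij, rfl⟩ := Finset.card_eq_two.mp hc
  have hiS : i ∈ S := hp (by simp)
  have hjS : j ∈ S := hp (by simp)
  have hsd : S \ {i, j} = (S.erase i).erase j := by
    ext y
    simp only [Finset.mem_sdiff, Finset.mem_insert, Finset.mem_singleton, Finset.mem_erase]
    tauto
  have hjei : j ∈ S.erase i := Finset.mem_erase.mpr ⟨Ne.symm hij, hjS⟩
  have hiej : i ∈ S.erase j := Finset.mem_erase.mpr ⟨hij, hiS⟩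
  rw [Finset.prod_pair hij, hsd]
  have hcomm : (S.erase j).erase i = (S.erase i).erase j := by
    ext y
    simp only [Finset.mem_erase]
    tauto
  rw [← Finset.mul_prod_erase _ _ hjei, ← Finset.mul_prod_erase _ _ hiej,
    ← Finset.mul_prod_erase _ _ hiS, ← Finset.mul_prod_erase _ _ hjei, hcomm]
  ring

lemma newton_top (k : ℕ) (x : ℕ → ℝ) :
    (∑ s ∈ (range (k+2)).powersetCard k, ∏ i ∈ s, x i)
      * (∑ s ∈ (range (k+2)).powersetCard (k+2), ∏ i ∈ s, x i) * ((k:ℝ)+2)^2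
    ≤ (∑ s ∈ (range (k+2)).powersetCard (k+1), ∏ i ∈ s, x i)^2 * (((k+2).choose 2 : ℝ)) := by
  set S := range (k+2) with hS
  have hcard : S.card = k + 2 := Finset.card_range _
  set P : ℕ → ℝ := fun i => ∏ j ∈ S.erase i, x j with hP
  -- top esymm
  have hEm : ∑ s ∈ S.powersetCard (k+2), ∏ i ∈ s, x i = ∏ i ∈ S, x i := by
    rw [← hcard, Finset.powersetCard_self, Finset.sum_singleton]
  -- E (k+1) = sum of P
  have hE1 : ∑ s ∈ S.powersetCard (k+1), ∏ i ∈ s, x i = ∑ i ∈ S, P i := by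
    have h := sum_powersetCard_compl S x 1 (by omega)
    rw [hcard] at h
    have h1 : k + 2 - 1 = k + 1 := by omega
    rw [h1] at h
    rw [h, Finset.powersetCard_one, Finset.sum_map]
    refine Finset.sum_congr rfl fun i hi => ?_
    congr 1
    simp [Finset.erase_eq]
  -- E k * E (k+2) = sum over pairs of P products
  have hE2 : (∑ s ∈ S.powersetCard k, ∏ i ∈ s, x i) * (∏ i ∈ S, x i)
      = ∑ p ∈ S.powersetCard 2, ∏ i ∈ p, P i := by
    have h := sum_powersetCard_compl S x 2 (by omega)
    rw [hcard] at h
    have h1 : k + 2 - 2 = k := by omega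
    rw [h1] at h
    rw [h, Finset.sum_mul]
    refine Finset.sum_congr rfl fun p hp => ?_
    rw [Finset.mem_powersetCard] at hp
    exact prod_sdiff_pair S x p hp.1 hp.2
  have hsq := two_mul_sum_pc_two S P
  have hcauchy : (∑ i ∈ S, P i)^2 ≤ ((k:ℝ)+2) * ∑ i ∈ S, P i ^ 2 := by
    have := sq_sum_le_card_mul_sum_sq (s := S) (f := P)
    rw [hcard] at this
    push_cast at this
    convert this using 2
  have hnat : (k + 2) * (k + 1) = (k + 2).choose 2 * 2 := by
    simpa [Nat.choose_one_right, Nat.succ_eq_add_one] using Nat.add_one_mul_choose_eq (k+1) 1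
  have hch : 2 * (((k+2).choose 2 : ℕ) : ℝ) = ((k:ℝ)+2) * ((k:ℝ)+1) := by
    have := congrArg (Nat.cast (R := ℝ)) hnat
    push_cast at this
    linarith
  rw [hEm, hE2, hE1]
  set Q := ∑ p ∈ S.powersetCard 2, ∏ i ∈ p, P i
  set SP := ∑ i ∈ S, P i
  set SS := ∑ i ∈ S, P i ^ 2
  set C2 := (((k+2).choose 2 : ℕ) : ℝ)
  have hm : (0:ℝ) ≤ (k:ℝ) + 2 := by positivity
  have h1 : Q * ((k:ℝ)+2)^2 = (SP^2 - SS)/2 * ((k:ℝ)+2)^2 := by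
    linear_combination (((k:ℝ)+2)^2/2) * hsq
  have h2 : SP^2 * C2 = SP^2 * (((k:ℝ)+2) * ((k:ℝ)+1))/2 := by
    linear_combination (SP^2/2) * hch
  have h3 : ((k:ℝ)+2) * SP^2 ≤ ((k:ℝ)+2) * (((k:ℝ)+2) * SS) :=
    mul_le_mul_of_nonneg_left hcauchy hm
  nlinarith [h1, h2, h3]

lemma exists_enum (t : Multiset ℝ) :
    ∃ x : ℕ → ℝ, (Finset.range (Multiset.card t)).val.map x = t := by
  obtain ⟨l, rfl⟩ : ∃ l : List ℝ, (l : Multiset ℝ) = t := ⟨t.toList, t.coe_toList⟩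
  refine ⟨fun i => l.getD i 0, ?_⟩
  have : (Finset.range l.length).val = (List.range l.length : Multiset ℕ) := rfl
  have hl : List.map (fun i => l.getD i 0) (List.range l.length) = l := by
    apply List.ext_getElem
    · simp
    · intro i h1 h2
      simp [List.getD_eq_getElem?_getD, List.getElem?_eq_getElem h2]
  rw [Multiset.coe_card, this, Multiset.map_coe, hl]

lemma newton_base (k : ℕ) (t : Multiset ℝ) (hc : Multiset.card t = k + 2) :
    t.esymm k * t.esymm (k+2) * (((k+2).choose (k+1) : ℝ))^2
      ≤ t.esymm (k+1)^2 * (((k+2).choose k : ℝ) * ((k+2).choose (k+2) : ℝ)) := by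
  obtain ⟨x, hx⟩ := exists_enum t
  rw [hc] at hx
  have hE : ∀ j, t.esymm j = ∑ s ∈ (range (k+2)).powersetCard j, ∏ i ∈ s, x i := by
    intro j
    rw [← hx, Finset.esymm_map_val]
  have hc1 : ((k+2).choose (k+1)) = k + 2 := Nat.choose_succ_self_right (k+1)
  have hc2 : ((k+2).choose (k+2)) = 1 := Nat.choose_self _
  have hc3 : ((k+2).choose k) = (k+2).choose 2 := by
    have := Nat.choose_symm (n := k+2) (k := 2) (by omega)
    simpa using this
  rw [hE, hE, hE, hc1, hc2, hc3]
  have h := newton_top k x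
  push_cast
  push_cast at h
  nlinarith [h]

lemma esymm_deriv (n : ℕ) (hn : 1 ≤ n) (t : Multiset ℝ) (hc : Multiset.card t = n)
    (h0 : ∀ x ∈ t, 0 ≤ x) :
    ∃ t' : Multiset ℝ, Multiset.card t' = n - 1 ∧ (∀ x ∈ t', 0 ≤ x) ∧
      ∀ j, j ≤ n - 1 → ((n - j : ℕ) : ℝ) * t.esymm j = (n : ℝ) * t'.esymm j := by
  set f : ℝ[X] := (t.map fun r => X + C r).prod with hf
  have hmon : f.Monic := by
    apply monic_multiset_prod_of_monic
    intro r _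
    exact monic_X_add_C r
  have hdeg : f.natDegree = n := by
    rw [hf, natDegree_multiset_prod_of_monic]
    · simp [Multiset.map_map, natDegree_X_add_C, hc]
    · intro p hp
      obtain ⟨r, _, rfl⟩ := Multiset.mem_map.mp hp
      exact monic_X_add_C r
  have hcoeff : ∀ j : ℕ, j ≤ n → f.coeff (n - j) = t.esymm j := by
    intro j hj
    have h1 : n - j ≤ Multiset.card t := by omega
    rw [hf, Multiset.prod_X_add_C_coeff t h1, hc]
    congr 1
    omega
  have hcoeff_nonneg : ∀ m : ℕ, 0 ≤ f.coeff m := by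
    intro m
    rcases le_or_gt m n with hm | hm
    · have : f.coeff m = t.esymm (n - m) := by
        have := hcoeff (n - m) (by omega)
        rwa [show n - (n - m) = m by omega] at this
      rw [this]
      exact esymm_nonneg t h0 _
    · rw [coeff_eq_zero_of_natDegree_lt (by omega : f.natDegree < m)]
  have hroots : f.roots = t.map fun r => -r := by
    have : f = ((t.map fun r => -r).map fun a => X - C a).prod := by
      rw [hf, Multiset.map_map]
      congr 1
      apply Multiset.map_congr rfl
      intro r _
      simp [sub_neg_eq_add]
    rw [this, roots_multiset_prod_X_sub_C]
  have hrc : Multiset.card f.roots = n := by rw [hroots, Multiset.card_map, hc]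
  set g : ℝ[X] := derivative f with hg
  have hgc : ∀ m : ℕ, g.coeff m = f.coeff (m + 1) * (m + 1) := fun m => coeff_derivative f m
  have hglead : g.coeff (n - 1) = (n : ℝ) := by
    rw [hgc, show n - 1 + 1 = n by omega, ← hdeg, hmon.coeff_natDegree, hdeg, one_mul,
      Nat.cast_sub hn]
    push_cast
    ring
  have hnR : ((n : ℝ)) ≠ 0 := by positivity
  have hg0 : g ≠ 0 := fun h => hnR (by rw [← hglead, h, coeff_zero])
  have hgdeg : g.natDegree = n - 1 := by
    refine le_antisymm ?_ (le_natDegree_of_ne_zero ?_)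
    · calc g.natDegree ≤ f.natDegree - 1 := natDegree_derivative_le f
        _ = n - 1 := by rw [hdeg]
    · rw [hglead]; exact hnR
  have hgl : g.leadingCoeff = (n : ℝ) := by
    rw [leadingCoeff, hgdeg, hglead]
  have hgroots : Multiset.card g.roots = n - 1 := by
    refine le_antisymm ((card_roots' g).trans_eq hgdeg) ?_
    have := f.card_roots_le_derivative
    rw [hrc, ← hg] at this
    omega
  have hrle : ∀ r ∈ g.roots, r ≤ 0 := by
    intro r hr
    by_contra hpos
    push_neg at hpos
    have hroot : g.eval r = 0 := (mem_roots hg0).mp hr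
    have : 0 < g.eval r := by
      rw [eval_eq_sum_range]
      apply Finset.sum_pos'
      · intro i _
        have h5 : (0:ℝ) ≤ g.coeff i := by
          rw [hgc]
          exact mul_nonneg (hcoeff_nonneg _) (by positivity)
        exact mul_nonneg h5 (pow_nonneg hpos.le i)
      · refine ⟨n - 1, ?_, ?_⟩
        · rw [hgdeg]; simp
        · rw [hglead]
          have : (0:ℝ) < (n:ℝ) := by positivity
          positivity
    linarith
  refine ⟨g.roots.map fun r => -r, by rw [Multiset.card_map, hgroots], ?_, ?_⟩
  · intro x hx
    obtain ⟨r, hr, rfl⟩ := Multiset.mem_map.mp hx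
    linarith [hrle r hr]
  · intro j hj
    have hjle : n - 1 - j ≤ g.natDegree := by omega
    have hcard : Multiset.card g.roots = g.natDegree := by rw [hgroots, hgdeg]
    have h1 := Polynomial.coeff_eq_esymm_roots_of_card hcard hjle
    rw [hgl, hgdeg] at h1
    have hidx : n - 1 - (n - 1 - j) = j := by omega
    rw [hidx] at h1
    have h2 : g.roots.esymm j = (-1:ℝ)^j * ((g.roots.map fun r => -r).esymm j) := by
      have h3 : g.roots = (g.roots.map fun r => -r).map Neg.neg := by
        rw [Multiset.map_map]
        simp
      conv_lhs => rw [h3]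
      rw [Multiset.esymm_neg]
    rw [h2] at h1
    have h4 : g.coeff (n - 1 - j) = f.coeff (n - j) * ((n - j : ℕ) : ℝ) := by
      rw [hgc, show n - 1 - j + 1 = n - j by omega]
      congr 1
      norm_cast
      omega
    rw [hcoeff j (by omega)] at h4
    have h6 := h4.symm.trans h1
    have h5 : (-1:ℝ)^j * (-1:ℝ)^j = 1 := by
      rw [← pow_add, ← two_mul, pow_mul]
      norm_num
    linear_combination h6 + ((n:ℝ) * (Multiset.map (fun r => -r) g.roots).esymm j) * h5

lemma choose_rel (n j : ℕ) (hj : j ≤ n) :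
    (n + 1 - j) * ((n+1).choose j) = (n + 1) * n.choose j := by
  have h1 : (n+1).choose (j+1) * (j+1) = (n+1).choose j * (n + 1 - j) :=
    Nat.choose_succ_right_eq (n+1) j
  have h2 : (n+1) * n.choose j = (n+1).choose (j+1) * (j+1) := by
    simpa [Nat.succ_eq_add_one] using Nat.add_one_mul_choose_eq n j
  rw [h2, h1]
  ring

lemma newton_master : ∀ n (t : Multiset ℝ), Multiset.card t = n → (∀ x ∈ t, 0 ≤ x) →
    ∀ k, k + 2 ≤ n →
    t.esymm k * t.esymm (k+2) * ((n.choose (k+1) : ℝ))^2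
      ≤ t.esymm (k+1)^2 * ((n.choose k : ℝ) * (n.choose (k+2) : ℝ)) := by
  intro n
  induction n with
  | zero => intro t _ _ k hk; omega
  | succ n IH =>
    intro t hc h0 k hk
    rcases eq_or_lt_of_le hk with heq | hlt
    · -- base case : k + 2 = n + 1
      have hn : n + 1 = k + 2 := heq.symm
      rw [hn] at hc ⊢
      exact newton_base k t hc
    · -- inductive step
      have hk2 : k + 2 ≤ n := by omega
      obtain ⟨t', hct', h0', hrel⟩ := esymm_deriv (n+1) (by omega) t hc h0
      rw [show n + 1 - 1 = n from rfl] at hct' hrel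
      have IH' := IH t' hct' h0' k hk2
      -- abbreviations
      set E : ℕ → ℝ := fun j => t.esymm j with hE
      set E' : ℕ → ℝ := fun j => t'.esymm j with hE'
      set a : ℕ → ℝ := fun j => ((n + 1 - j : ℕ) : ℝ) with ha
      set b : ℕ → ℝ := fun j => (((n+1).choose j : ℕ) : ℝ) with hb
      set b' : ℕ → ℝ := fun j => ((n.choose j : ℕ) : ℝ) with hb'
      have hapos : ∀ j, j ≤ n → (0:ℝ) < a j := by
        intro j hj
        have : 0 < n + 1 - j := by omega
        simpa [ha] using (Nat.cast_pos (α := ℝ)).mpr this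
      have hbrel : ∀ j, j ≤ n → a j * b j = ((n:ℝ)+1) * b' j := by
        intro j hj
        have := congrArg (Nat.cast (R := ℝ)) (choose_rel n j hj)
        push_cast at this
        rw [ha, hb, hb']
        push_cast
        linarith
      have hErel : ∀ j, j ≤ n → a j * E j = ((n:ℝ)+1) * E' j := by
        intro j hj
        have := hrel j hj
        rw [ha, hE, hE']
        push_cast at this ⊢
        linarith
      have hA : (0:ℝ) < a k * a (k+2) * (a (k+1))^2 := by
        have h1 := hapos k (by omega)
        have h2 := hapos (k+1) (by omega)
        have h3 := hapos (k+2) (by omega)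
        positivity
      have key : (a k * a (k+2) * (a (k+1))^2) * (E k * E (k+2) * (b (k+1))^2)
          ≤ (a k * a (k+2) * (a (k+1))^2) * (E (k+1)^2 * (b k * b (k+2))) := by
        calc (a k * a (k+2) * (a (k+1))^2) * (E k * E (k+2) * (b (k+1))^2)
            = (a k * E k) * (a (k+2) * E (k+2)) * (a (k+1) * b (k+1))^2 := by ring
          _ = (((n:ℝ)+1) * E' k) * (((n:ℝ)+1) * E' (k+2)) * (((n:ℝ)+1) * b' (k+1))^2 := by
              rw [hErel k (by omega), hErel (k+2) (by omega), hbrel (k+1) (by omega)]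
          _ = ((n:ℝ)+1)^4 * (E' k * E' (k+2) * (b' (k+1))^2) := by ring
          _ ≤ ((n:ℝ)+1)^4 * (E' (k+1)^2 * (b' k * b' (k+2))) := by
              refine mul_le_mul_of_nonneg_left ?_ (by positivity)
              exact IH'
          _ = (((n:ℝ)+1) * E' (k+1))^2 * ((((n:ℝ)+1) * b' k) * (((n:ℝ)+1) * b' (k+2))) := by
              ring
          _ = (a (k+1) * E (k+1))^2 * ((a k * b k) * (a (k+2) * b (k+2))) := by
              rw [hErel (k+1) (by omega), hbrel k (by omega), hbrel (k+2) (by omega)]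
          _ = (a k * a (k+2) * (a (k+1))^2) * (E (k+1)^2 * (b k * b (k+2))) := by ring
      exact le_of_mul_le_mul_left key hA

end NewtonAux

/-- Newton's inequalities for elementary symmetric polynomials of nonnegative reals. -/
theorem stmt2 (n : ℕ) (α : ℕ → ℝ) (hnonneg : ∀ i ∈ Finset.range n, 0 ≤ α i)
    (σ : ℕ → ℝ)
    (hσ : ∀ k : ℕ, σ k = ∑ s ∈ (Finset.range n).powersetCard k, ∏ i ∈ s, α i)
    (k : ℕ) (hk1 : 1 ≤ k) (hkn : k ≤ n - 1) :
    (σ (k - 1) / (n.choose (k - 1) : ℝ)) * (σ (k + 1) / (n.choose (k + 1) : ℝ)) ≤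
      (σ k / (n.choose k : ℝ)) ^ 2 := by
  have hn : k + 1 ≤ n := by omega
  obtain ⟨j, rfl⟩ : ∃ j, k = j + 1 := ⟨k - 1, by omega⟩
  have hj1 : j + 1 - 1 = j := by omega
  set t : Multiset ℝ := (Finset.range n).val.map α with ht
  have hct : Multiset.card t = n := by rw [ht, Multiset.card_map]; simp
  have h0t : ∀ x ∈ t, 0 ≤ x := by
    intro x hx
    obtain ⟨i, hi, rfl⟩ := Multiset.mem_map.mp hx
    exact hnonneg i hi
  have hEs : ∀ m, σ m = t.esymm m := by
    intro m
    rw [hσ m, ht, Finset.esymm_map_val]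
  have hmaster := NewtonAux.newton_master n t hct h0t j (by omega)
  have hc1 : (0:ℝ) < (n.choose j : ℝ) := by
    exact_mod_cast Nat.choose_pos (by omega : j ≤ n)
  have hc2 : (0:ℝ) < (n.choose (j+1) : ℝ) := by
    exact_mod_cast Nat.choose_pos (by omega : j + 1 ≤ n)
  have hc3 : (0:ℝ) < (n.choose (j+2) : ℝ) := by
    exact_mod_cast Nat.choose_pos (by omega : j + 2 ≤ n)
  rw [hj1, hEs, hEs, hEs]
  rw [div_mul_div_comm, div_pow, div_le_div_iff₀ (by positivity) (by positivity)]
  calc t.esymm j * t.esymm (j + 1 + 1) * (n.choose (j+1) : ℝ)^2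
      = t.esymm j * t.esymm (j + 2) * (n.choose (j+1) : ℝ)^2 := by norm_num
    _ ≤ t.esymm (j+1)^2 * ((n.choose j : ℝ) * (n.choose (j+2) : ℝ)) := hmaster
    _ = t.esymm (j+1)^2 * ((n.choose j : ℝ) * (n.choose (j+1+1) : ℝ)) := by norm_num
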